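/- Let v₁, …, vₙ be distinct points in ℝᵈ and let V be the matrix with entries ‖vᵢ − vⱼ‖². Then the matrix W := V − J has at most one positive eigenvalue. -/

import Mathlib

open Finset Matrix

lemma quad_nonpos (d n : ℕ) (v : Fin n → EuclideanSpace ℝ (Fin d))
    (V : Matrix (Fin n) (Fin n) ℝ) (hVdef : ∀ i j, V i j = ‖v i - v j‖ ^ 2)
    (W : Matrix (Fin n) (Fin n) ℝ)
    (hWdef : W = V - Matrix.of (fun _ _ => (1 : ℝ)))
    (x : Fin n → ℝ) (hx : ∑ k, x k = 0) :
    x ⬝ᵥ W.mulVec x ≤ 0 := by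
  set S : EuclideanSpace ℝ (Fin d) := ∑ i, x i • v i with hS
  have hinner : ∑ i, ∑ j, x i * x j * (inner ℝ (v i) (v j) : ℝ) = inner ℝ S S := by
    rw [hS, sum_inner]
    refine Finset.sum_congr rfl fun i _ => ?_
    rw [real_inner_smul_left, inner_sum, Finset.mul_sum]
    refine Finset.sum_congr rfl fun j _ => ?_
    rw [real_inner_smul_right]; ring
  have key : x ⬝ᵥ W.mulVec x = -2 * inner ℝ S S := by
    have : x ⬝ᵥ W.mulVec x
        = ∑ i, ∑ j, x i * x j * (‖v i‖^2 + ‖v j‖^2 - 2 * (inner ℝ (v i) (v j) : ℝ) - 1) := by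
      simp only [dotProduct, Matrix.mulVec, hWdef, Matrix.sub_apply, Matrix.of_apply,
        hVdef, Finset.mul_sum]
      refine Finset.sum_congr rfl fun i _ => Finset.sum_congr rfl fun j _ => ?_
      rw [norm_sub_sq_real]; ring
    rw [this, ← hinner]
    have expand : ∀ i j, x i * x j * (‖v i‖^2 + ‖v j‖^2 - 2 * (inner ℝ (v i) (v j) : ℝ) - 1)
        = (x i * ‖v i‖^2) * x j + x i * (x j * ‖v j‖^2)
          - 2 * (x i * x j * (inner ℝ (v i) (v j) : ℝ)) - x i * x j := by
      intro i j; ring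
    simp only [expand, Finset.sum_sub_distrib, Finset.sum_add_distrib,
      ← Finset.sum_mul, ← Finset.mul_sum, hx]
    ring
  rw [key]
  have h2 : (0:ℝ) ≤ inner ℝ S S := real_inner_self_nonneg
  nlinarith

theorem stmt2 (d n : ℕ) (v : Fin n → EuclideanSpace ℝ (Fin d))
    (hv : Function.Injective v)
    (V : Matrix (Fin n) (Fin n) ℝ) (hVdef : ∀ i j, V i j = ‖v i - v j‖ ^ 2)
    (W : Matrix (Fin n) (Fin n) ℝ)
    (hWdef : W = V - Matrix.of (fun _ _ => (1 : ℝ)))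
    (hW : W.IsHermitian) :
    (Finset.univ.filter fun i => 0 < hW.eigenvalues i).card ≤ 1 := by
  by_contra h
  push_neg at h
  obtain ⟨i, hi, j, hj, hij⟩ := Finset.one_lt_card.mp h
  rw [Finset.mem_filter] at hi hj
  have hli : 0 < hW.eigenvalues i := hi.2
  have hlj : 0 < hW.eigenvalues j := hj.2
  set u : EuclideanSpace ℝ (Fin n) := hW.eigenvectorBasis i with hu
  set w : EuclideanSpace ℝ (Fin n) := hW.eigenvectorBasis j with hwdef
  have hdot : ∀ a b : EuclideanSpace ℝ (Fin n), (a : Fin n → ℝ) ⬝ᵥ (b : Fin n → ℝ) = inner ℝ a b := by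
    intro a b
    simp [dotProduct, PiLp.inner_apply, RCLike.inner_apply, mul_comm]
  have horth := orthonormal_iff_ite.mp hW.eigenvectorBasis.orthonormal
  have huu : (u : Fin n → ℝ) ⬝ᵥ u = 1 := by rw [hdot]; simp [hu]
  have hww : (w : Fin n → ℝ) ⬝ᵥ w = 1 := by rw [hdot]; simp [hwdef]
  have huw : (u : Fin n → ℝ) ⬝ᵥ w = 0 := by rw [hdot]; simp [hu, hwdef, hij]
  have hwu : (w : Fin n → ℝ) ⬝ᵥ u = 0 := by rw [hdot]; simp [hu, hwdef, hij.symm]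
  have hWu : W.mulVec u = hW.eigenvalues i • (u : Fin n → ℝ) := hW.mulVec_eigenvectorBasis i
  have hWw : W.mulVec w = hW.eigenvalues j • (w : Fin n → ℝ) := hW.mulVec_eigenvectorBasis j
  by_cases hsu : ∑ k, (u : Fin n → ℝ) k = 0
  · have hle := quad_nonpos d n v V hVdef W hWdef u hsu
    rw [hWu, dotProduct_smul, smul_eq_mul, huu] at hle
    nlinarith
  · set x : Fin n → ℝ := (∑ k, (w : Fin n → ℝ) k) • (u : Fin n → ℝ)
      - (∑ k, (u : Fin n → ℝ) k) • (w : Fin n → ℝ) with hx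
    have hxk : ∀ k, x k = (∑ k, (w : Fin n → ℝ) k) * (u : Fin n → ℝ) k
        - (∑ k, (u : Fin n → ℝ) k) * (w : Fin n → ℝ) k := fun k => rfl
    have hxsum : ∑ k, x k = 0 := by
      simp only [hxk, Finset.sum_sub_distrib, ← Finset.mul_sum]
      ring
    have hle := quad_nonpos d n v V hVdef W hWdef x hxsum
    set su := ∑ k, (u : Fin n → ℝ) k with hsud
    set sw := ∑ k, (w : Fin n → ℝ) k with hswd
    have hWx : ∀ k, (W.mulVec x) k
        = sw * ((W.mulVec (u : Fin n → ℝ)) k) - su * ((W.mulVec (w : Fin n → ℝ)) k) := by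
      intro k
      simp only [Matrix.mulVec, dotProduct, Finset.mul_sum, ← Finset.sum_sub_distrib]
      exact Finset.sum_congr rfl fun l _ => by rw [hxk]; ring
    have huuk : ∑ k, (u : Fin n → ℝ) k * (u : Fin n → ℝ) k = 1 := huu
    have hwwk : ∑ k, (w : Fin n → ℝ) k * (w : Fin n → ℝ) k = 1 := hww
    have huwk : ∑ k, (u : Fin n → ℝ) k * (w : Fin n → ℝ) k = 0 := huw
    have hwuk : ∑ k, (w : Fin n → ℝ) k * (u : Fin n → ℝ) k = 0 := hwu
    have hcalc : x ⬝ᵥ W.mulVec x = sw^2 * hW.eigenvalues i + su^2 * hW.eigenvalues j := by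
      have step : x ⬝ᵥ W.mulVec x
          = ∑ k, (sw^2 * hW.eigenvalues i * ((u : Fin n → ℝ) k * (u : Fin n → ℝ) k)
              + su^2 * hW.eigenvalues j * ((w : Fin n → ℝ) k * (w : Fin n → ℝ) k)
              - sw * su * hW.eigenvalues j * ((u : Fin n → ℝ) k * (w : Fin n → ℝ) k)
              - su * sw * hW.eigenvalues i * ((w : Fin n → ℝ) k * (u : Fin n → ℝ) k)) := by
        refine Finset.sum_congr rfl fun k _ => ?_
        have hsmul : ∀ (c : ℝ) (a : EuclideanSpace ℝ (Fin n)) (m : Fin n),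
            (c • a) m = c * a m := fun _ _ _ => rfl
        rw [hxk, hWx, hWu, hWw]
        simp only [hsmul, Pi.smul_apply, smul_eq_mul]
        ring
      rw [step]
      simp only [Finset.sum_add_distrib, Finset.sum_sub_distrib, ← Finset.mul_sum,
        huuk, hwwk, huwk, hwuk]
      ring
    rw [hcalc] at hle
    nlinarith [mul_self_pos.mpr hsu, sq_nonneg sw, sq_nonneg su]
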